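/- In the braid group B₃ = ⟨a, b ∣ aba = bab⟩, let w = a^{−n₁}b^{m₁}⋯a^{−n_j}b^{m_j} be a proper alternating word (j ≥ 1 and nᵢ, mᵢ ≥ 1 for all i), and let w' = a^{−m_j}b^{n_j}⋯a^{−m₁}b^{n₁} be the proper alternating word obtained by reversing the order of the syllable pairs and exchanging the roles of the two exponent sequences. Then for every integer k, the inverse of (ab)^{3k}·w is conjugate in B₃ to (ab)^{−3k}·w'. In particular, inversion carries the Murasugi class Ω₆ = {(ab)^{3k}w : k ∈ ℤ, w a proper alternating word} into itself up to conjugacy. -/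

import Mathlib

/-- The single braid relation `aba = bab` of the braid group `B₃`,
recorded as the element `aba(bab)⁻¹` of the free group on two generators. -/
def braidRels : Set (FreeGroup (Fin 2)) :=
  {FreeGroup.of 0 * FreeGroup.of 1 * FreeGroup.of 0 *
    (FreeGroup.of 1 * FreeGroup.of 0 * FreeGroup.of 1)⁻¹}

/-- The braid group `B₃ = ⟨a, b ∣ aba = bab⟩`. -/
abbrev B₃ : Type := PresentedGroup braidRels

/-- The generator `a` of `B₃`. -/
def braidA : B₃ := PresentedGroup.of 0

/-- The generator `b` of `B₃`. -/
def braidB : B₃ := PresentedGroup.of 1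

/-- The proper alternating word `a^{-n₁}b^{m₁}⋯a^{-n_j}b^{m_j}` in `B₃`
associated to a list of pairs of positive integers `[(n₁,m₁),…,(n_j,m_j)]`. -/
def altWord (L : List (ℕ+ × ℕ+)) : B₃ :=
  (L.map fun p => braidA ^ (-(p.1 : ℤ)) * braidB ^ ((p.2 : ℕ) : ℤ)).prod

lemma braid_rel : braidA * braidB * braidA = braidB * braidA * braidB := by
  have h : braidA * braidB * braidA * (braidB * braidA * braidB)⁻¹ = 1 := by
    show (QuotientGroup.mk' _) (FreeGroup.of 0 * FreeGroup.of 1 * FreeGroup.of 0 *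
      (FreeGroup.of 1 * FreeGroup.of 0 * FreeGroup.of 1)⁻¹) = 1
    rw [QuotientGroup.mk'_apply]
    exact (QuotientGroup.eq_one_iff _).mpr (Subgroup.subset_normalClosure rfl)
  exact mul_inv_eq_one.mp h

noncomputable def braidD : B₃ := braidA * braidB * braidA

lemma braidD_a : braidD * braidA = braidB * braidD := by
  show braidA * braidB * braidA * braidA = braidB * (braidA * braidB * braidA)
  conv_lhs => rw [braid_rel]
  group

lemma braidD_b : braidD * braidB = braidA * braidD := by
  show braidA * braidB * braidA * braidB = braidA * (braidA * braidB * braidA)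
  conv_rhs => rw [braid_rel]
  group

lemma conjD_a : braidD * braidA * braidD⁻¹ = braidB := by
  rw [braidD_a]; group

lemma conjD_b : braidD * braidB * braidD⁻¹ = braidA := by
  rw [braidD_b]; group

lemma conjD_a_zpow (t : ℤ) : braidD * braidA ^ t * braidD⁻¹ = braidB ^ t := by
  have h := map_zpow (MulAut.conj braidD) braidA t
  simp only [MulAut.conj_apply] at h
  rw [conjD_a] at h
  rw [← h]

lemma conjD_b_zpow (t : ℤ) : braidD * braidB ^ t * braidD⁻¹ = braidA ^ t := by
  have h := map_zpow (MulAut.conj braidD) braidB t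
  simp only [MulAut.conj_apply] at h
  rw [conjD_b] at h
  rw [← h]

lemma ab_cube : (braidA * braidB) ^ 3 = braidD ^ 2 := by
  have h : braidD ^ 2 = braidA * braidB * braidA * (braidB * braidA * braidB) := by
    rw [pow_two]
    show braidA * braidB * braidA * (braidA * braidB * braidA) = _
    rw [braid_rel]
  rw [h]; simp [pow_succ, pow_two, mul_assoc]

lemma ab_cube_z : (braidA * braidB) ^ (3 : ℤ) = braidD ^ 2 := by
  rw [show (3 : ℤ) = ((3 : ℕ) : ℤ) from rfl, zpow_natCast, ab_cube]

lemma D2_comm_a : Commute (braidD ^ 2) braidA := by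
  show braidD ^ 2 * braidA = braidA * braidD ^ 2
  rw [pow_two, mul_assoc, braidD_a, ← mul_assoc, braidD_b, mul_assoc, ← pow_two]

lemma D2_comm_b : Commute (braidD ^ 2) braidB := by
  show braidD ^ 2 * braidB = braidB * braidD ^ 2
  rw [pow_two, mul_assoc, braidD_b, ← mul_assoc, braidD_a, mul_assoc, ← pow_two]

lemma D2_comm_alt (M : List (ℕ+ × ℕ+)) : Commute (braidD ^ 2) (altWord M) := by
  induction M with
  | nil => simpa [altWord] using Commute.one_right _
  | cons p M ih =>
    have : altWord (p :: M) = braidA ^ (-(p.1 : ℤ)) * braidB ^ ((p.2 : ℕ) : ℤ) * altWord M := by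
      simp [altWord]
    rw [this]
    exact ((D2_comm_a.zpow_right _).mul_right (D2_comm_b.zpow_right _)).mul_right ih

lemma altWord_append (M N : List (ℕ+ × ℕ+)) :
    altWord (M ++ N) = altWord M * altWord N := by
  simp [altWord]

lemma conjD_inv_alt (L : List (ℕ+ × ℕ+)) :
    braidD * (altWord L)⁻¹ * braidD⁻¹ =
      altWord (L.reverse.map fun p => (p.2, p.1)) := by
  induction L with
  | nil => simp [altWord]
  | cons p L ih =>
    have h1 : altWord (p :: L) = braidA ^ (-(p.1 : ℤ)) * braidB ^ ((p.2 : ℕ) : ℤ) * altWord L := by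
      simp [altWord]
    have h2 : ((p :: L).reverse.map fun p => (p.2, p.1)) =
        (L.reverse.map fun p => (p.2, p.1)) ++ [(p.2, p.1)] := by simp
    rw [h1, h2, altWord_append, ← ih]
    have h3 : altWord [(p.2, p.1)] = braidA ^ (-(p.2 : ℤ)) * braidB ^ ((p.1 : ℕ) : ℤ) := by
      simp [altWord]
    rw [h3, ← conjD_b_zpow (-(p.2 : ℤ)), ← conjD_a_zpow ((p.1 : ℕ) : ℤ)]
    group


/-- In `B₃ = ⟨a, b ∣ aba = bab⟩`, if `w = a^{-n₁}b^{m₁}⋯a^{-n_j}b^{m_j}` is a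
proper alternating word and `w' = a^{-m_j}b^{n_j}⋯a^{-m₁}b^{n₁}`, then for
every integer `k` the inverse of `(ab)^{3k}·w` is conjugate to
`(ab)^{-3k}·w'`: inversion carries the Murasugi class `Ω₆` into itself up to
conjugacy. -/
theorem braid_omega6_inv_conj :
    ∀ (L : List (ℕ+ × ℕ+)), L ≠ [] → ∀ k : ℤ,
      IsConj (((braidA * braidB) ^ (3 * k) * altWord L)⁻¹)
        ((braidA * braidB) ^ (-(3 * k)) *
          altWord (L.reverse.map fun p => (p.2, p.1))) := by
  intro L _ k
  rw [isConj_iff]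
  refine ⟨braidD, ?_⟩
  have hpow : (braidA * braidB) ^ (3 * k) = (braidD ^ 2) ^ k := by
    rw [zpow_mul]
    rw [ab_cube_z]
  have hpow' : (braidA * braidB) ^ (-(3 * k)) = ((braidD ^ 2) ^ k)⁻¹ := by
    rw [zpow_neg, hpow]
  rw [hpow, hpow', mul_inv_rev]
  have hc : Commute ((braidD ^ 2) ^ k) (altWord (L.reverse.map fun p => (p.2, p.1))) :=
    (D2_comm_alt _).zpow_left k
  have hDc : Commute braidD ((braidD ^ 2) ^ k) := (Commute.refl braidD).pow_right 2 |>.zpow_right k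
  calc braidD * ((altWord L)⁻¹ * ((braidD ^ 2) ^ k)⁻¹) * braidD⁻¹
      = (braidD * (altWord L)⁻¹ * braidD⁻¹) * (braidD * ((braidD ^ 2) ^ k)⁻¹ * braidD⁻¹) := by
        group
    _ = altWord (L.reverse.map fun p => (p.2, p.1)) * ((braidD ^ 2) ^ k)⁻¹ := by
        rw [conjD_inv_alt, hDc.inv_right.eq]; group
    _ = ((braidD ^ 2) ^ k)⁻¹ * altWord (L.reverse.map fun p => (p.2, p.1)) :=
        (hc.inv_left.eq).symm
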